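/- Let X_n = ∑_{π ∈ S_t} (|ψ_π⟩⟨ψ_π|)^{⊗n} where |ψ_π⟩ are the normalized permutation states on (ℂ^d)^{⊗t} satisfying ∑_{π∈S_t} |⟨ψ_σ|ψ_π⟩|^n ≤ e^{τ/d^n} with τ = t(t−1)/2, and let G_{n,t} be the projector onto the support of X_n. Then ‖X_n − G_{n,t}‖_∞ ≤ e^{τ/d^n} − 1, and consequently (2 − e^{τ/d^n})·G_{n,t} ≤ X_n ≤ e^{τ/d^n}·G_{n,t}. -/

import Mathlib

open scoped Matrix BigOperators ComplexInnerProductSpace ComplexOrder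
open scoped Matrix.Norms.L2Operator

set_option linter.unusedSectionVars false
set_option maxHeartbeats 1200000

/-- The `n`-fold tensor power `(|ψ⟩⟨ψ|)^{⊗n}` of a rank-one projector, as a matrix in the
product basis. -/
noncomputable def outerPow (d t n : ℕ) (ψ : EuclideanSpace ℂ (Fin t → Fin d)) :
    Matrix (Fin n → Fin t → Fin d) (Fin n → Fin t → Fin d) ℂ :=
  Matrix.of fun f g => (∏ i : Fin n, ψ (f i)) * (starRingEnd ℂ) (∏ i : Fin n, ψ (g i))

namespace XnAux

open Matrix

variable {m : Type*} [Fintype m] [DecidableEq m]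

lemma star_dot_self (w : m → ℂ) : star w ⬝ᵥ w = ((∑ i, ‖w i‖ ^ 2 : ℝ) : ℂ) := by
  push_cast
  simp only [dotProduct, Pi.star_apply]
  refine Finset.sum_congr rfl fun i _ => ?_
  rw [RCLike.star_def, ← Complex.normSq_eq_conj_mul_self, Complex.normSq_eq_norm_sq]
  push_cast
  ring

lemma herm_quad_real {A : Matrix m m ℂ} (hA : Aᴴ = A) (x : m → ℂ) :
    star x ⬝ᵥ A *ᵥ x = (((star x ⬝ᵥ A *ᵥ x).re : ℝ) : ℂ) := by
  have h1 : star x ⬝ᵥ A *ᵥ x = star (star (A *ᵥ x) ⬝ᵥ x) := Matrix.star_dotProduct _ _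
  have h2 : star (A *ᵥ x) ⬝ᵥ x = star x ⬝ᵥ A *ᵥ x := by
    rw [Matrix.star_mulVec, ← Matrix.dotProduct_mulVec, hA]
  rw [h2] at h1
  exact (Complex.conj_eq_iff_re.mp h1.symm).symm

lemma psd_smul {A : Matrix m m ℂ} (hA : A.PosSemidef) {c : ℝ} (hc : 0 ≤ c) :
    (((c : ℝ) : ℂ) • A).PosSemidef := by
  refine Matrix.PosSemidef.of_dotProduct_mulVec_nonneg ?_ ?_
  · show (((c : ℝ) : ℂ) • A)ᴴ = ((c : ℝ) : ℂ) • A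
    rw [Matrix.conjTranspose_smul, hA.1.eq, Complex.star_def, Complex.conj_ofReal]
  · intro x
    rw [Matrix.smul_mulVec, dotProduct_smul, smul_eq_mul]
    exact mul_nonneg (Complex.zero_le_real.mpr hc) (hA.dotProduct_mulVec_nonneg x)

/-- Quadratic form bound via absolute row and column sums. -/
lemma quad_abs_bound (A : Matrix m m ℂ) (r : ℝ)
    (hrow : ∀ σ, ∑ π, ‖A σ π‖ ≤ r) (hcol : ∀ π, ∑ σ, ‖A σ π‖ ≤ r) (x : m → ℂ) :
    ‖star x ⬝ᵥ A *ᵥ x‖ ≤ r * ∑ σ, ‖x σ‖ ^ 2 := by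
  have h1 : ‖star x ⬝ᵥ A *ᵥ x‖ ≤ ∑ σ, ∑ π, ‖x σ‖ * ‖A σ π‖ * ‖x π‖ := by
    refine (norm_sum_le _ _).trans (Finset.sum_le_sum fun σ _ => ?_)
    rw [Pi.star_apply, norm_mul, norm_star]
    calc ‖x σ‖ * ‖(A *ᵥ x) σ‖ ≤ ‖x σ‖ * ∑ π, ‖A σ π‖ * ‖x π‖ := by
          refine mul_le_mul_of_nonneg_left ?_ (norm_nonneg _)
          exact (norm_sum_le _ _).trans (le_of_eq (by simp [norm_mul]))
      _ = ∑ π, ‖x σ‖ * ‖A σ π‖ * ‖x π‖ := by rw [Finset.mul_sum]; ring_nf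
  have h2 : ∀ σ π, ‖x σ‖ * ‖A σ π‖ * ‖x π‖ ≤
      (‖A σ π‖ * ‖x σ‖ ^ 2 + ‖A σ π‖ * ‖x π‖ ^ 2) / 2 := by
    intro σ π
    have hA0 : (0:ℝ) ≤ ‖A σ π‖ := norm_nonneg _
    nlinarith [sq_nonneg (‖x σ‖ - ‖x π‖), norm_nonneg (x σ), norm_nonneg (x π)]
  have h3 : ∑ σ, ∑ π, ‖x σ‖ * ‖A σ π‖ * ‖x π‖ ≤
      ((∑ σ, ∑ π, ‖A σ π‖ * ‖x σ‖ ^ 2) + ∑ σ, ∑ π, ‖A σ π‖ * ‖x π‖ ^ 2) / 2 := by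
    rw [← Finset.sum_add_distrib, Finset.sum_div]
    refine Finset.sum_le_sum fun σ _ => ?_
    rw [← Finset.sum_add_distrib, Finset.sum_div]
    exact Finset.sum_le_sum fun π _ => h2 σ π
  have h4 : ∑ σ, ∑ π, ‖A σ π‖ * ‖x σ‖ ^ 2 ≤ r * ∑ σ, ‖x σ‖ ^ 2 := by
    rw [Finset.mul_sum]
    refine Finset.sum_le_sum fun σ _ => ?_
    rw [← Finset.sum_mul]
    have := mul_le_mul_of_nonneg_right (hrow σ) (sq_nonneg ‖x σ‖)
    linarith
  have h5 : ∑ σ, ∑ π, ‖A σ π‖ * ‖x π‖ ^ 2 ≤ r * ∑ σ, ‖x σ‖ ^ 2 := by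
    rw [Finset.sum_comm, Finset.mul_sum]
    refine Finset.sum_le_sum fun π _ => ?_
    rw [← Finset.sum_mul]
    have := mul_le_mul_of_nonneg_right (hcol π) (sq_nonneg ‖x π‖)
    linarith
  have := h1.trans h3
  linarith

open scoped MatrixOrder in
/-- If `A` is PSD and `a•1 - A` is PSD then `a•A - A*A` is PSD. -/
lemma smul_sub_sq_psd {A : Matrix m m ℂ} (hA : A.PosSemidef) (a : ℝ)
    (h : (((a : ℝ) : ℂ) • 1 - A).PosSemidef) :
    ((((a : ℝ) : ℂ) • A) - A * A).PosSemidef := by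
  have hs : (CFC.sqrt A).PosSemidef := (CFC.sqrt_nonneg A).posSemidef
  set S := CFC.sqrt A with hSdef
  have hSH : Sᴴ = S := hs.1
  have hSS : S * S = A := CFC.sqrt_mul_sqrt_self A hA.nonneg
  have key := h.conjTranspose_mul_mul_same S
  have hSAS : S * A * S = A * A := by
    rw [← hSS, ← Matrix.mul_assoc S S S, Matrix.mul_assoc (S * S) S S]
  have : Sᴴ * ((((a : ℝ) : ℂ) • 1) - A) * S = (((a : ℝ) : ℂ) • A) - A * A := by
    rw [hSH, Matrix.mul_sub, Matrix.sub_mul, Matrix.mul_smul, mul_one, Matrix.smul_mul, hSS,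
      hSAS]
  rwa [this] at key

/-- If `A` is PSD, `0 ≤ a` and `A - a•1` is PSD then `A*A - a•A` is PSD. -/
lemma sq_sub_smul_psd {A : Matrix m m ℂ} (hA : A.PosSemidef) (a : ℝ) (ha : 0 ≤ a)
    (h : (A - ((a : ℝ) : ℂ) • 1).PosSemidef) :
    (A * A - (((a : ℝ) : ℂ) • A)).PosSemidef := by
  set N := A - ((a : ℝ) : ℂ) • 1 with hN
  have hNH : Nᴴ = N := h.1
  have key : (Nᴴ * N + (((a : ℝ) : ℂ) • N)).PosSemidef :=
    (Matrix.posSemidef_conjTranspose_mul_self N).add (psd_smul h ha)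
  have : Nᴴ * N + (((a : ℝ) : ℂ) • N) = A * A - (((a : ℝ) : ℂ) • A) := by
    rw [hNH, hN]
    simp only [Matrix.sub_mul, Matrix.mul_sub, Matrix.smul_mul, Matrix.mul_smul,
      smul_mul_assoc, mul_smul_comm, one_mul, mul_one, smul_smul, smul_sub, sub_smul]
    module
  rwa [this] at key

/-- If `±D ≤ ε•1` (as PSD statements) for Hermitian `D`, then `‖D‖ ≤ ε` in L2 operator norm. -/
lemma norm_le_of_psd (D : Matrix m m ℂ) (hD : Dᴴ = D) (ε : ℝ) (hε : 0 ≤ ε)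
    (h1 : (((ε : ℝ) : ℂ) • 1 - D).PosSemidef) (h2 : (((ε : ℝ) : ℂ) • 1 + D).PosSemidef) :
    ‖D‖ ≤ ε := by
  have e1 : (((2 * ε : ℝ) : ℂ) • 1 - (((ε : ℝ) : ℂ) • 1 + D)).PosSemidef := by
    have : ((2 * ε : ℝ) : ℂ) • (1 : Matrix m m ℂ) - (((ε : ℝ) : ℂ) • 1 + D) =
        ((ε : ℝ) : ℂ) • 1 - D := by push_cast; module
    rw [this]; exact h1
  have e2 := smul_sub_sq_psd h2 (2 * ε) e1
  have e3 : ((((2 * ε : ℝ)) : ℂ) • (((ε : ℝ) : ℂ) • 1 + D)) -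
      ((((ε : ℝ) : ℂ) • 1 + D) * (((ε : ℝ) : ℂ) • 1 + D)) =
      (((ε ^ 2 : ℝ) : ℂ) • 1 - D * D) := by
    simp only [Matrix.add_mul, Matrix.mul_add, smul_mul_assoc, mul_smul_comm, one_mul, mul_one,
      smul_smul, smul_add]
    push_cast
    module
  rw [e3] at e2
  have hb : ∀ v : m → ℂ, ∑ i, ‖(D *ᵥ v) i‖ ^ 2 ≤ ε ^ 2 * ∑ i, ‖v i‖ ^ 2 := by
    intro v
    have h0 := e2.dotProduct_mulVec_nonneg v
    have hq : star v ⬝ᵥ ((((ε ^ 2 : ℝ) : ℂ) • 1 - D * D) *ᵥ v) =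
        (((ε ^ 2 * ∑ i, ‖v i‖ ^ 2 - ∑ i, ‖(D *ᵥ v) i‖ ^ 2 : ℝ)) : ℂ) := by
      rw [Matrix.sub_mulVec, dotProduct_sub, Matrix.smul_mulVec,
        Matrix.one_mulVec, dotProduct_smul, smul_eq_mul, star_dot_self]
      have hDD : star v ⬝ᵥ ((D * D) *ᵥ v) = star (D *ᵥ v) ⬝ᵥ (D *ᵥ v) := by
        rw [Matrix.star_mulVec, hD, ← Matrix.mulVec_mulVec, Matrix.dotProduct_mulVec]
      rw [hDD, star_dot_self]
      push_cast
      ring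
    rw [hq] at h0
    have := Complex.zero_le_real.mp h0
    linarith
  rw [Matrix.l2_opNorm_def]
  refine ContinuousLinearMap.opNorm_le_bound _ hε fun x => ?_
  have happ : ((Matrix.toEuclideanLin ≪≫ₗ LinearMap.toContinuousLinearMap) D) x =
      WithLp.toLp 2 (D *ᵥ x.ofLp) := rfl
  rw [happ, EuclideanSpace.norm_eq, EuclideanSpace.norm_eq x]
  calc Real.sqrt (∑ i, ‖(D *ᵥ x.ofLp) i‖ ^ 2)
      ≤ Real.sqrt (ε ^ 2 * ∑ i, ‖x.ofLp i‖ ^ 2) :=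
        Real.sqrt_le_sqrt (hb _)
    _ = ε * Real.sqrt (∑ i, ‖x.ofLp i‖ ^ 2) := by
        rw [Real.sqrt_mul (sq_nonneg ε), Real.sqrt_sq hε]

end XnAux

theorem Xn_close_to_support_projector (d t n : ℕ) (hd : 2 ≤ d) (ht : 1 ≤ t) (hn : 1 ≤ n)
    (ψ : Equiv.Perm (Fin t) → EuclideanSpace ℂ (Fin t → Fin d))
    (hunit : ∀ π, ‖ψ π‖ = 1)
    (hGram : ∀ σ : Equiv.Perm (Fin t),
      (∑ π : Equiv.Perm (Fin t), ‖(⟪ψ σ, ψ π⟫ : ℂ)‖ ^ n) ≤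
        Real.exp (((t : ℝ) * ((t : ℝ) - 1) / 2) / (d : ℝ) ^ n))
    (G : Matrix (Fin n → Fin t → Fin d) (Fin n → Fin t → Fin d) ℂ)
    (hGproj : G * G = G) (hGherm : Gᴴ = G)
    (hGsupp : LinearMap.range G.mulVecLin =
      LinearMap.range (∑ π : Equiv.Perm (Fin t), outerPow d t n (ψ π)).mulVecLin) :
    ‖(∑ π : Equiv.Perm (Fin t), outerPow d t n (ψ π)) - G‖ ≤
        Real.exp (((t : ℝ) * ((t : ℝ) - 1) / 2) / (d : ℝ) ^ n) - 1 ∧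
    ((∑ π : Equiv.Perm (Fin t), outerPow d t n (ψ π)) -
        (((2 - Real.exp (((t : ℝ) * ((t : ℝ) - 1) / 2) / (d : ℝ) ^ n) : ℝ) : ℂ) • G)).PosSemidef ∧
    ((((Real.exp (((t : ℝ) * ((t : ℝ) - 1) / 2) / (d : ℝ) ^ n) : ℝ) : ℂ) • G) -
        (∑ π : Equiv.Perm (Fin t), outerPow d t n (ψ π))).PosSemidef := by
  classical
  set E : ℝ := Real.exp (((t : ℝ) * ((t : ℝ) - 1) / 2) / (d : ℝ) ^ n) with hE
  have hE1 : 1 ≤ E := by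
    apply Real.one_le_exp
    apply div_nonneg
    · have h1t : (1:ℝ) ≤ (t:ℝ) := by exact_mod_cast ht
      nlinarith
    · positivity
  set X := ∑ π : Equiv.Perm (Fin t), outerPow d t n (ψ π) with hXdef
  set v : Equiv.Perm (Fin t) → (Fin n → Fin t → Fin d) → ℂ :=
    fun π f => ∏ i : Fin n, ψ π (f i) with hvdef
  set B : Matrix (Equiv.Perm (Fin t)) (Fin n → Fin t → Fin d) ℂ :=
    Matrix.of fun σ g => star (v σ g) with hBdef
  have hXB : X = Bᴴ * B := by
    ext f g
    simp only [hXdef, Matrix.sum_apply, outerPow, Matrix.of_apply, Matrix.mul_apply,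
      Matrix.conjTranspose_apply, hBdef, hvdef, star_star, starRingEnd_apply]
  set M := B * Bᴴ with hMdef
  have hM : ∀ σ π, M σ π = (⟪ψ σ, ψ π⟫ : ℂ) ^ n := by
    intro σ π
    have h1 : M σ π = ∑ g : Fin n → Fin t → Fin d, ∏ i : Fin n,
        (star (ψ σ (g i)) * ψ π (g i)) := by
      rw [hMdef]
      simp only [Matrix.mul_apply, Matrix.conjTranspose_apply, hBdef, Matrix.of_apply,
        star_star, hvdef]
      refine Finset.sum_congr rfl fun g _ => ?_
      rw [star_prod, ← Finset.prod_mul_distrib]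
    rw [h1]
    have h2 : (⟪ψ σ, ψ π⟫ : ℂ) = ∑ a : Fin t → Fin d, star (ψ σ a) * ψ π a := by
      rw [PiLp.inner_apply]
      simp [RCLike.inner_apply, RCLike.star_def]
      exact Finset.sum_congr rfl fun _ _ => mul_comm _ _
    rw [h2, Fintype.sum_pow]
  have hMdiag : ∀ σ, M σ σ = 1 := by
    intro σ
    rw [hM σ σ, inner_self_eq_norm_sq_to_K, hunit σ]
    norm_num
  have hMrows : ∀ σ, ∑ π, ‖M σ π‖ ≤ E := by
    intro σ
    calc ∑ π, ‖M σ π‖ = ∑ π, ‖(⟪ψ σ, ψ π⟫ : ℂ)‖ ^ n := by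
          refine Finset.sum_congr rfl fun π _ => ?_
          rw [hM σ π, norm_pow]
      _ ≤ E := hGram σ
  have hMherm : Mᴴ = M := Matrix.isHermitian_mul_conjTranspose_self B
  have hMpsd : M.PosSemidef := Matrix.posSemidef_self_mul_conjTranspose B
  have hsub_herm : (M - 1)ᴴ = M - 1 := by
    rw [Matrix.conjTranspose_sub, hMherm, Matrix.conjTranspose_one]
  -- row and column sums of `M - 1`
  have hrow1 : ∀ σ, ∑ π, ‖(M - 1) σ π‖ ≤ E - 1 := by
    intro σ
    have hterm : ∀ π, ‖(M - 1) σ π‖ = ‖M σ π‖ - (if σ = π then 1 else 0) := by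
      intro π
      by_cases hc : σ = π
      · subst hc
        simp [Matrix.sub_apply, Matrix.one_apply, hMdiag σ]
      · simp [Matrix.sub_apply, Matrix.one_apply, hc]
    calc ∑ π, ‖(M - 1) σ π‖ = ∑ π, (‖M σ π‖ - if σ = π then 1 else 0) :=
          Finset.sum_congr rfl fun π _ => hterm π
      _ = (∑ π, ‖M σ π‖) - 1 := by
          rw [Finset.sum_sub_distrib]
          simp
      _ ≤ E - 1 := by have := hMrows σ; linarith
  have hcol1 : ∀ π, ∑ σ, ‖(M - 1) σ π‖ ≤ E - 1 := by
    intro π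
    have hsym : ∀ σ, ‖(M - 1) σ π‖ = ‖(M - 1) π σ‖ := by
      intro σ
      have h := congrFun (congrFun hsub_herm σ) π
      rw [Matrix.conjTranspose_apply] at h
      rw [← h, norm_star]
    simp_rw [hsym]
    exact hrow1 π
  have hq : ∀ x, ‖star x ⬝ᵥ (M - 1) *ᵥ x‖ ≤ (E - 1) * ∑ σ, ‖x σ‖ ^ 2 := fun x =>
    XnAux.quad_abs_bound _ _ hrow1 hcol1 x
  -- the two PSD facts about M
  have quadM : ∀ x, star x ⬝ᵥ M *ᵥ x =
      ((∑ σ, ‖x σ‖ ^ 2 : ℝ) : ℂ) + star x ⬝ᵥ (M - 1) *ᵥ x := by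
    intro x
    rw [Matrix.sub_mulVec, dotProduct_sub, Matrix.one_mulVec, XnAux.star_dot_self]
    ring
  have hqbound : ∀ x : Equiv.Perm (Fin t) → ℂ,
      |(star x ⬝ᵥ (M - 1) *ᵥ x).re| ≤ (E - 1) * ∑ σ, ‖x σ‖ ^ 2 := by
    intro x
    have h1 := hq x
    have h2 : |(star x ⬝ᵥ (M - 1) *ᵥ x).re| ≤ ‖star x ⬝ᵥ (M - 1) *ᵥ x‖ := by
      exact Complex.abs_re_le_norm _
    linarith
  have hK : (((E : ℝ) : ℂ) • 1 - M).PosSemidef := by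
    refine Matrix.PosSemidef.of_dotProduct_mulVec_nonneg ?_ ?_
    · show (((E : ℝ) : ℂ) • 1 - M)ᴴ = ((E : ℝ) : ℂ) • 1 - M
      rw [Matrix.conjTranspose_sub, Matrix.conjTranspose_smul, Matrix.conjTranspose_one,
        hMherm, Complex.star_def, Complex.conj_ofReal]
    · intro x
      have hqre := XnAux.herm_quad_real hsub_herm x
      have hquad : star x ⬝ᵥ ((((E : ℝ) : ℂ) • 1 - M) *ᵥ x) =
          (((E - 1) * (∑ σ, ‖x σ‖ ^ 2) - (star x ⬝ᵥ (M - 1) *ᵥ x).re : ℝ) : ℂ) := by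
        rw [Matrix.sub_mulVec, dotProduct_sub, Matrix.smul_mulVec,
          Matrix.one_mulVec, dotProduct_smul, smul_eq_mul, XnAux.star_dot_self,
          quadM x, hqre]
        push_cast [Complex.ofReal_re]
        ring
      rw [hquad, Complex.zero_le_real]
      have := (abs_le.mp (hqbound x)).2
      linarith
  have hN : (M - ((2 - E : ℝ) : ℂ) • 1).PosSemidef := by
    refine Matrix.PosSemidef.of_dotProduct_mulVec_nonneg ?_ ?_
    · show (M - ((2 - E : ℝ) : ℂ) • 1)ᴴ = M - ((2 - E : ℝ) : ℂ) • 1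
      rw [Matrix.conjTranspose_sub, Matrix.conjTranspose_smul, Matrix.conjTranspose_one,
        hMherm, Complex.star_def, Complex.conj_ofReal]
    · intro x
      have hqre := XnAux.herm_quad_real hsub_herm x
      have hquad : star x ⬝ᵥ ((M - ((2 - E : ℝ) : ℂ) • 1) *ᵥ x) =
          (((E - 1) * (∑ σ, ‖x σ‖ ^ 2) + (star x ⬝ᵥ (M - 1) *ᵥ x).re : ℝ) : ℂ) := by
        rw [Matrix.sub_mulVec, dotProduct_sub, Matrix.smul_mulVec,
          Matrix.one_mulVec, dotProduct_smul, smul_eq_mul, XnAux.star_dot_self,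
          quadM x, hqre]
        push_cast [Complex.ofReal_re]
        ring
      rw [hquad, Complex.zero_le_real]
      have := (abs_le.mp (hqbound x)).1
      linarith
  have hMub : ((((E : ℝ) : ℂ) • M) - M * M).PosSemidef := XnAux.smul_sub_sq_psd hMpsd E hK
  have hMlb : (M * M - (((2 - E : ℝ) : ℂ) • M)).PosSemidef := by
    by_cases hcase : 0 ≤ 2 - E
    · exact XnAux.sq_sub_smul_psd hMpsd (2 - E) hcase hN
    · have h1 : M * M - ((2 - E : ℝ) : ℂ) • M = Mᴴ * M + ((E - 2 : ℝ) : ℂ) • M := by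
        rw [hMherm]
        push_cast
        module
      rw [h1]
      exact (Matrix.posSemidef_conjTranspose_mul_self M).add
        (XnAux.psd_smul hMpsd (by linarith))
  -- facts about G and X
  have hXherm : Xᴴ = X := by
    rw [hXB, Matrix.conjTranspose_mul, Matrix.conjTranspose_conjTranspose]
  have hGX : G * X = X := by
    apply Matrix.toLin'.injective
    apply LinearMap.ext
    intro u
    rw [Matrix.toLin'_apply, Matrix.toLin'_apply]
    show (G * X) *ᵥ u = X *ᵥ u
    rw [← Matrix.mulVec_mulVec]
    have hmem : X *ᵥ u ∈ LinearMap.range G.mulVecLin := by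
      rw [hGsupp]
      exact ⟨u, rfl⟩
    obtain ⟨y, hy⟩ := hmem
    rw [Matrix.mulVecLin_apply] at hy
    rw [← hy, Matrix.mulVec_mulVec, hGproj]
  have hXG : X * G = X := by
    have : (G * X)ᴴ = X * G := by
      rw [Matrix.conjTranspose_mul, hXherm, hGherm]
    rw [← this, hGX, hXherm]
  have hGXG : G * X * G = X := by rw [hGX, hXG]
  -- quadratic-form transfer to M
  have htrans : ∀ x : (Fin n → Fin t → Fin d) → ℂ, ∃ w : Equiv.Perm (Fin t) → ℂ,
      star x ⬝ᵥ G *ᵥ x = star w ⬝ᵥ M *ᵥ w ∧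
      star x ⬝ᵥ X *ᵥ x = star w ⬝ᵥ (M * M) *ᵥ w := by
    intro x
    have hmem : G *ᵥ x ∈ LinearMap.range X.mulVecLin := by
      rw [← hGsupp]
      exact ⟨x, rfl⟩
    obtain ⟨u, hu⟩ := hmem
    rw [Matrix.mulVecLin_apply] at hu
    have hz : G *ᵥ x = Bᴴ *ᵥ (B *ᵥ u) := by
      rw [← hu, hXB, ← Matrix.mulVec_mulVec]
    refine ⟨B *ᵥ u, ?_, ?_⟩
    · have hstep : star x ᵥ* G = star (G *ᵥ x) := by
        rw [Matrix.star_mulVec, hGherm]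
      conv_lhs => rw [← hGproj, ← Matrix.mulVec_mulVec, Matrix.dotProduct_mulVec, hstep, hz]
      rw [Matrix.star_mulVec, Matrix.conjTranspose_conjTranspose,
        ← Matrix.dotProduct_mulVec, Matrix.mulVec_mulVec]
    · have hstep : star x ᵥ* G = star (G *ᵥ x) := by
        rw [Matrix.star_mulVec, hGherm]
      conv_lhs => rw [← hGXG, ← Matrix.mulVec_mulVec, ← Matrix.mulVec_mulVec,
        Matrix.dotProduct_mulVec, hstep, hz]
      rw [Matrix.star_mulVec, Matrix.conjTranspose_conjTranspose,
        ← Matrix.dotProduct_mulVec]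
      congr 1
      rw [hMdef, hXB]
      simp only [Matrix.mulVec_mulVec, ← Matrix.mul_assoc]
  -- the two PSD conclusions
  have goal2 : (X - ((2 - E : ℝ) : ℂ) • G).PosSemidef := by
    refine Matrix.PosSemidef.of_dotProduct_mulVec_nonneg ?_ ?_
    · show (X - ((2 - E : ℝ) : ℂ) • G)ᴴ = X - ((2 - E : ℝ) : ℂ) • G
      rw [Matrix.conjTranspose_sub, Matrix.conjTranspose_smul, hXherm, hGherm,
        Complex.star_def, Complex.conj_ofReal]
    · intro x
      obtain ⟨w, hw1, hw2⟩ := htrans x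
      rw [Matrix.sub_mulVec, dotProduct_sub, Matrix.smul_mulVec,
        dotProduct_smul, hw1, hw2]
      have := hMlb.dotProduct_mulVec_nonneg w
      rwa [Matrix.sub_mulVec, dotProduct_sub, Matrix.smul_mulVec,
        dotProduct_smul] at this
  have goal3 : ((((E : ℝ) : ℂ) • G) - X).PosSemidef := by
    refine Matrix.PosSemidef.of_dotProduct_mulVec_nonneg ?_ ?_
    · show ((((E : ℝ) : ℂ) • G) - X)ᴴ = (((E : ℝ) : ℂ) • G) - X
      rw [Matrix.conjTranspose_sub, Matrix.conjTranspose_smul, hXherm, hGherm,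
        Complex.star_def, Complex.conj_ofReal]
    · intro x
      obtain ⟨w, hw1, hw2⟩ := htrans x
      rw [Matrix.sub_mulVec, dotProduct_sub, Matrix.smul_mulVec,
        dotProduct_smul, hw1, hw2]
      have := hMub.dotProduct_mulVec_nonneg w
      rwa [Matrix.sub_mulVec, dotProduct_sub, Matrix.smul_mulVec,
        dotProduct_smul] at this
  -- the norm bound
  have h1G : (1 - G).PosSemidef := by
    have hΗ : (1 - G)ᴴ = 1 - G := by
      rw [Matrix.conjTranspose_sub, Matrix.conjTranspose_one, hGherm]
    have hsq : (1 - G)ᴴ * (1 - G) = 1 - G := by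
      rw [hΗ]
      simp only [Matrix.mul_sub, Matrix.sub_mul, one_mul, mul_one]
      rw [hGproj]
      abel
    have := Matrix.posSemidef_conjTranspose_mul_self (1 - G)
    rwa [hsq] at this
  have goal1 : ‖X - G‖ ≤ E - 1 := by
    have hDherm : (X - G)ᴴ = X - G := by
      rw [Matrix.conjTranspose_sub, hXherm, hGherm]
    have h1' : (((E - 1 : ℝ) : ℂ) • 1 - (X - G)).PosSemidef := by
      have e : ((E - 1 : ℝ) : ℂ) • (1 : Matrix (Fin n → Fin t → Fin d) _ ℂ) - (X - G) =
          ((((E : ℝ) : ℂ) • G) - X) + ((E - 1 : ℝ) : ℂ) • (1 - G) := by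
        push_cast
        module
      rw [e]
      exact goal3.add (XnAux.psd_smul h1G (by linarith))
    have h2' : (((E - 1 : ℝ) : ℂ) • 1 + (X - G)).PosSemidef := by
      have e : ((E - 1 : ℝ) : ℂ) • (1 : Matrix (Fin n → Fin t → Fin d) _ ℂ) + (X - G) =
          (X - ((2 - E : ℝ) : ℂ) • G) + ((E - 1 : ℝ) : ℂ) • (1 - G) := by
        push_cast
        module
      rw [e]
      exact goal2.add (XnAux.psd_smul h1G (by linarith))
    exact XnAux.norm_le_of_psd (X - G) hDherm (E - 1) (by linarith) h1' h2'
  exact ⟨goal1, goal2, goal3⟩
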